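/- arXiv:2211.12319 — 2 statements merged into one kernel-verified Lean document; each statement's English description precedes it below -/
import Mathlib

section
/- Every restriction-closed property of d-way tensors over a finite field that satisfies the descending chain condition on restriction-closed properties is characterised by finitely many forbidden restrictions: for every restriction-closed property X there exist finitely many tensors T₁, ..., T_k (T_i ∈ V_i^⊗d) such that X = ⋂_{i=1}^k X_{⊁ T_i}, where X_{⊁ T_i} is the property of not having T_i as a restriction. -/
open scoped TensorProduct

/-- The space of `d`-way tensors on `K^n`. -/
abbrev Tens (K : Type) [Field K] (d n : ℕ) : Type := ⨂[K] (_ : Fin d), (Fin n → K)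

/-- The map `φ^{⊗d}` induced on `d`-way tensors by a linear map `φ`. -/
noncomputable def tmap (K : Type) [Field K] (d : ℕ) {m n : ℕ}
    (φ : (Fin m → K) →ₗ[K] (Fin n → K)) : Tens K d m →ₗ[K] Tens K d n :=
  PiTensorProduct.map (fun _ => φ)

/-- `Restricts K d S T` means `T` is a restriction of `S`, i.e. `S ⪰ T`. -/
def Restricts (K : Type) [Field K] (d : ℕ) {m n : ℕ}
    (S : Tens K d m) (T : Tens K d n) : Prop :=
  ∃ φ : (Fin m → K) →ₗ[K] (Fin n → K), tmap K d φ S = T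

/-- A restriction-closed property of `d`-way tensors. -/
def RClosed (K : Type) [Field K] (d : ℕ) (X : ∀ n : ℕ, Set (Tens K d n)) : Prop :=
  ∀ (m n : ℕ) (φ : (Fin m → K) →ₗ[K] (Fin n → K)), ∀ S ∈ X m, tmap K d φ S ∈ X n

lemma restricts_refl (K : Type) [Field K] (d : ℕ) {n : ℕ} (S : Tens K d n) :
    Restricts K d S S := by
  refine ⟨LinearMap.id, ?_⟩
  show PiTensorProduct.map (fun _ => LinearMap.id) S = S
  rw [PiTensorProduct.map_id]
  rfl

lemma restricts_of_tmap (K : Type) [Field K] (d : ℕ) {m n p : ℕ}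
    (φ : (Fin m → K) →ₗ[K] (Fin n → K)) {S : Tens K d m} {T : Tens K d p}
    (h : Restricts K d (tmap K d φ S) T) : Restricts K d S T := by
  obtain ⟨ψ, hψ⟩ := h
  refine ⟨ψ ∘ₗ φ, ?_⟩
  show PiTensorProduct.map (fun _ => ψ ∘ₗ φ) S = T
  rw [PiTensorProduct.map_comp]
  exact hψ

/-- The property determined by forbidding a list of tensors as restrictions. -/
def YL (K : Type) [Field K] (d : ℕ) (L : List (Σ n : ℕ, Tens K d n)) :
    ∀ n : ℕ, Set (Tens K d n) :=
  fun n => {S | ∀ t ∈ L, ¬ Restricts K d S t.2}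

lemma yl_rclosed (K : Type) [Field K] (d : ℕ) (L : List (Σ n : ℕ, Tens K d n)) :
    RClosed K d (YL K d L) := by
  intro m n φ S hS t ht hres
  exact hS t ht (restricts_of_tmap K d φ hres)

lemma yl_cons_subset (K : Type) [Field K] (d : ℕ) (t : Σ n : ℕ, Tens K d n)
    (L : List (Σ n : ℕ, Tens K d n)) (n : ℕ) : YL K d (t :: L) n ⊆ YL K d L n :=
  fun _ hS s hs => hS s (List.mem_cons_of_mem _ hs)

open Classical in
/-- The greedy sequence of lists of forbidden tensors. -/
noncomputable def seqL (K : Type) [Field K] (d : ℕ) (X : ∀ n : ℕ, Set (Tens K d n)) :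
    ℕ → List (Σ n : ℕ, Tens K d n)
  | 0 => []
  | (i + 1) =>
    let L := seqL K d X i
    if h : ∃ t : Σ n : ℕ, Tens K d n, t.2 ∈ YL K d L t.1 ∧ t.2 ∉ X t.1
    then h.choose :: L else L

/-- If restriction-closed properties of `d`-way tensors over the finite field `K` satisfy the
descending chain condition, then every restriction-closed property is characterised by
finitely many forbidden restrictions: `X = ⋂_{i=1}^k X_{⊁ T_i}`. -/
theorem stmt4 (K : Type) [Field K] [Fintype K] (d : ℕ) (hd : 1 ≤ d)
    (hdcc : ∀ X : ℕ → ∀ n : ℕ, Set (Tens K d n),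
      (∀ i, RClosed K d (X i)) →
      (∀ i n, X (i + 1) n ⊆ X i n) →
      ∃ N : ℕ, ∀ i, N ≤ i → ∀ n, X i n = X N n) :
    ∀ X : ∀ n : ℕ, Set (Tens K d n), RClosed K d X →
      ∃ (k : ℕ) (dims : Fin k → ℕ) (T : ∀ i : Fin k, Tens K d (dims i)),
        ∀ (n : ℕ) (S : Tens K d n), S ∈ X n ↔ ∀ i : Fin k, ¬ Restricts K d S (T i) := by
  intro X hX
  classical
  set Y : ℕ → ∀ n : ℕ, Set (Tens K d n) := fun i => YL K d (seqL K d X i) with hY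
  have hYr : ∀ i, RClosed K d (Y i) := fun i => yl_rclosed K d _
  have hmono : ∀ i n, Y (i + 1) n ⊆ Y i n := by
    intro i n
    simp only [hY, seqL]
    split
    · exact yl_cons_subset K d _ _ n
    · exact fun _ h => h
  -- X is contained in every Y i
  have hXY : ∀ i n, X n ⊆ Y i n := by
    intro i
    induction i with
    | zero => intro n S _ t ht; simp [seqL] at ht
    | succ i ih =>
        intro n S hS
        show S ∈ YL K d (seqL K d X (i + 1)) n
        simp only [seqL]
        split
        · rename_i h
          intro t ht
          rcases List.mem_cons.mp ht with h1 | h2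
          · subst h1
            intro ⟨φ, hφ⟩
            have := hX n _ φ S hS
            rw [hφ] at this
            exact h.choose_spec.2 this
          · exact ih n hS t h2
        · exact ih n hS
  obtain ⟨N, hN⟩ := hdcc Y hYr hmono
  -- Y N ⊆ X
  have hYX : ∀ n, Y N n ⊆ X n := by
    intro n S hS
    by_contra hSX
    have h : ∃ t : Σ n : ℕ, Tens K d n, t.2 ∈ YL K d (seqL K d X N) t.1 ∧ t.2 ∉ X t.1 :=
      ⟨⟨n, S⟩, hS, hSX⟩
    have hstep : seqL K d X (N + 1) = h.choose :: seqL K d X N := by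
      simp only [seqL]; rw [dif_pos h]
    have hmem : h.choose.2 ∈ Y (N + 1) h.choose.1 := by
      rw [hN (N + 1) (Nat.le_succ N)]
      exact h.choose_spec.1
    have : ¬ Restricts K d h.choose.2 h.choose.2 := by
      have := hmem
      simp only [hY, hstep] at this
      exact this h.choose List.mem_cons_self
    exact this (restricts_refl K d _)
  -- conclude
  set L := seqL K d X N with hL
  refine ⟨L.length, fun i => (L.get i).1, fun i => (L.get i).2, fun n S => ?_⟩
  constructor
  · intro hS i
    exact hXY N n hS (L.get i) (L.get_mem i)
  · intro h
    apply hYX n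
    intro t ht
    obtain ⟨i, hi⟩ := List.mem_iff_get.mp ht
    rw [← hi]
    exact h i
end

section
/- Let P be a polynomial generic representation of degree d ≥ 0 over a finite field K and U a finite-dimensional K-vector space. Then the top-degree part is invariant under shifting: (Sh_U P)_{>d−1} ≅ P_{>d−1}, where Sh_U P is the representation V ↦ P(U ⊕ V). Moreover Sh_U P decomposes as the direct sum of a copy of P (via P(ι_V) for the inclusion ι_V: V → U ⊕ V) and the kernel Q of the projection-induced morphism Sh_U P → P, and Q has degree at most d − 1. -/
/-- A generic representation over `K`, presented on the skeleton `n ↦ K^n` of the category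
of finite-dimensional `K`-vector spaces: a functor `Vec → Vec`. -/
structure GenRep (K : Type) [Field K] where
  obj : ℕ → Type
  [addcg : ∀ n, AddCommGroup (obj n)]
  [mod : ∀ n, Module K (obj n)]
  map : ∀ {m n : ℕ}, ((Fin m → K) →ₗ[K] (Fin n → K)) → (obj m →ₗ[K] obj n)
  map_id : ∀ n : ℕ, map (LinearMap.id : (Fin n → K) →ₗ[K] (Fin n → K)) = LinearMap.id
  map_comp : ∀ {m n p : ℕ} (φ : (Fin m → K) →ₗ[K] (Fin n → K))
    (ψ : (Fin n → K) →ₗ[K] (Fin p → K)), map (ψ ∘ₗ φ) = map ψ ∘ₗ map φ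

attribute [instance] GenRep.addcg GenRep.mod

variable {K : Type} [Field K]

/-- `f : (α → K) → W` is (given by) a polynomial of (total) degree at most `e` in the
coordinates, with coefficients in the `K`-module `W`.  For `e = -1` this forces `f = 0`. -/
def PolyDeg (K : Type) [Field K] {α : Type} [Fintype α] {W : Type} [AddCommGroup W]
    [Module K W] (e : ℤ) (f : (α → K) → W) : Prop :=
  ∃ (s : Finset (α →₀ ℕ)) (c : (α →₀ ℕ) → W),
    (∀ m ∈ s, ((m.sum fun _ k => k : ℕ) : ℤ) ≤ e) ∧
    ∀ x : α → K, f x = ∑ m ∈ s, (∏ a ∈ m.support, x a ^ m a) • c m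

/-- A generic representation has degree at most `e` if all its maps
`Hom(K^m, K^n) → Hom(P(K^m), P(K^n))` are polynomial of degree `≤ e` in the matrix entries. -/
def GenRep.HasDegLE (P : GenRep K) (e : ℤ) : Prop :=
  ∀ m n : ℕ, PolyDeg K e (fun x : Fin n × Fin m → K =>
    P.map ((Matrix.of fun i j => x (i, j)).mulVecLin))

/-- A generic representation is polynomial if it has some finite degree. -/
def GenRep.IsPoly (P : GenRep K) : Prop := ∃ e : ℤ, P.HasDegLE e

/-- `P` has degree exactly `d`. -/
def GenRep.IsDegree (P : GenRep K) (d : ℤ) : Prop :=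
  P.HasDegLE d ∧ ∀ e : ℤ, P.HasDegLE e → d ≤ e

/-- A subrepresentation of a generic representation. -/
structure SubRep (P : GenRep K) where
  carrier : ∀ n : ℕ, Submodule K (P.obj n)
  stable : ∀ {m n : ℕ} (φ : (Fin m → K) →ₗ[K] (Fin n → K)),
    ∀ x ∈ carrier m, P.map φ x ∈ carrier n

/-- The quotient representation `P/N` has degree at most `e`; expressed via the composites
`mkQ ∘ P(φ)`, which present the maps of `P/N`. -/
def QuotDegLE (P : GenRep K) (N : SubRep P) (e : ℤ) : Prop :=
  ∀ m n : ℕ, PolyDeg K e (fun x : Fin n × Fin m → K =>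
    (N.carrier n).mkQ ∘ₗ P.map ((Matrix.of fun i j => x (i, j)).mulVecLin))

/-- `N` is the top part `P_{>e}`: the inclusion-wise minimal subrepresentation of `P` whose
quotient has degree at most `e`. -/
def IsTopPart (P : GenRep K) (e : ℤ) (N : SubRep P) : Prop :=
  QuotDegLE P N e ∧ ∀ N' : SubRep P, QuotDegLE P N' e → ∀ n, N.carrier n ≤ N'.carrier n

/-- A morphism (natural transformation) of generic representations. -/
structure RepHom (P Q : GenRep K) where
  app : ∀ n : ℕ, P.obj n →ₗ[K] Q.obj n
  natural : ∀ {m n : ℕ} (φ : (Fin m → K) →ₗ[K] (Fin n → K)),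
    app n ∘ₗ P.map φ = Q.map φ ∘ₗ app m

/-- The canonical identification `K^{u+n} ≅ K^u × K^n`. -/
noncomputable def sumEquiv (K : Type) [Field K] (u n : ℕ) :
    (Fin (u + n) → K) ≃ₗ[K] (Fin u → K) × (Fin n → K) :=
  (LinearEquiv.funCongrLeft K K finSumFinEquiv).trans
    (LinearEquiv.sumArrowLequivProdArrow _ _ K K)

/-- The map `id_U ⊕ φ : U ⊕ V → U ⊕ W` on the skeleton. -/
noncomputable def dsum (K : Type) [Field K] (u : ℕ) {m n : ℕ}
    (φ : (Fin m → K) →ₗ[K] (Fin n → K)) : (Fin (u + m) → K) →ₗ[K] (Fin (u + n) → K) :=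
  (sumEquiv K u n).symm.toLinearMap ∘ₗ (LinearMap.prodMap LinearMap.id φ) ∘ₗ
    (sumEquiv K u m).toLinearMap

/-- The inclusion `ι_V : V → U ⊕ V`, `v ↦ 0 + v`. -/
noncomputable def incl (K : Type) [Field K] (u n : ℕ) :
    (Fin n → K) →ₗ[K] (Fin (u + n) → K) :=
  (sumEquiv K u n).symm.toLinearMap ∘ₗ LinearMap.inr K (Fin u → K) (Fin n → K)

/-- The projection `π_V : U ⊕ V → V`. -/
noncomputable def projV (K : Type) [Field K] (u n : ℕ) :
    (Fin (u + n) → K) →ₗ[K] (Fin n → K) :=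
  LinearMap.snd K (Fin u → K) (Fin n → K) ∘ₗ (sumEquiv K u n).toLinearMap

/-- The shift `Sh_U P : V ↦ P(U ⊕ V)` of a generic representation. -/
noncomputable def GenRep.shift (P : GenRep K) (u : ℕ) : GenRep K where
  obj n := P.obj (u + n)
  map φ := P.map (dsum K u φ)
  map_id n := by
    show P.map (dsum K u LinearMap.id) = LinearMap.id
    rw [show dsum K u (LinearMap.id : (Fin n → K) →ₗ[K] _) = LinearMap.id by
      ext x; simp [dsum]]
    exact P.map_id _
  map_comp φ ψ := by
    show P.map (dsum K u (ψ ∘ₗ φ)) = P.map (dsum K u ψ) ∘ₗ P.map (dsum K u φ)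
    rw [show dsum K u (ψ ∘ₗ φ) = dsum K u ψ ∘ₗ dsum K u φ by ext x; simp [dsum]]
    exact P.map_comp _ _


section Aux

open Finset in
lemma polyDeg_comp_linear {α : Type} [Fintype α] {W W' : Type} [AddCommGroup W] [Module K W]
    [AddCommGroup W'] [Module K W'] {e : ℤ} {f : (α → K) → W} (g : W →ₗ[K] W')
    (hf : PolyDeg K e f) : PolyDeg K e (fun x => g (f x)) := by
  obtain ⟨s, c, hs, hc⟩ := hf
  refine ⟨s, fun m => g (c m), hs, fun x => ?_⟩
  show g (f x) = _
  rw [hc x, map_sum]; simp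

lemma polyDeg_add {α : Type} [Fintype α] {W : Type} [AddCommGroup W] [Module K W]
    {e : ℤ} {f g : (α → K) → W} (hf : PolyDeg K e f) (hg : PolyDeg K e g) :
    PolyDeg K e (fun x => f x + g x) := by
  classical
  obtain ⟨s, c, hs, hc⟩ := hf
  obtain ⟨t, b, ht, hb⟩ := hg
  refine ⟨s ∪ t, fun m => (if m ∈ s then c m else 0) + (if m ∈ t then b m else 0), ?_, ?_⟩
  · intro m hm
    rcases Finset.mem_union.1 hm with h | h
    exacts [hs m h, ht m h]
  · intro x
    show f x + g x = _
    rw [hc x, hb x]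
    beta_reduce
    simp only [smul_add, smul_ite, smul_zero]
    rw [Finset.sum_add_distrib, Finset.sum_ite_mem, Finset.sum_ite_mem,
      Finset.union_inter_cancel_left, Finset.union_inter_cancel_right]

lemma polyDeg_congr {α : Type} [Fintype α] {W : Type} [AddCommGroup W] [Module K W]
    {e : ℤ} {f g : (α → K) → W} (h : ∀ x, f x = g x) (hg : PolyDeg K e g) :
    PolyDeg K e f := by
  obtain ⟨s, c, hs, hc⟩ := hg
  exact ⟨s, c, hs, fun x => (h x).trans (hc x)⟩

lemma polyDeg_sub_subst {γ α : Type} [Fintype γ] [Fintype α] {W : Type} [AddCommGroup W]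
    [Module K W] (d : ℕ) (F : (γ → K) → W) (hF : PolyDeg K (d : ℤ) F)
    (σ₁ σ₀ : (α → K) → γ → K) (ρ : α → γ) (hρ : Function.Injective ρ)
    (h1 : ∀ x a, σ₁ x (ρ a) = x a) (h0 : ∀ x a, σ₀ x (ρ a) = x a)
    (hc1 : ∀ x g, g ∉ Set.range ρ → σ₁ x g = σ₁ 0 g)
    (hc0 : ∀ x g, g ∉ Set.range ρ → σ₀ x g = σ₀ 0 g) :
    PolyDeg K ((d : ℤ) - 1) (fun x => F (σ₁ x) - F (σ₀ x)) := by
  classical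
  obtain ⟨s, c, hs, hc⟩ := hF
  set R : Finset γ := Finset.image ρ Finset.univ with hR
  have hRmem : ∀ g : γ, g ∈ R ↔ g ∈ Set.range ρ := by
    intro g; simp [hR, Set.mem_range, eq_comm]
  set ν : (γ →₀ ℕ) → (α →₀ ℕ) := fun μ => Finsupp.comapDomain ρ μ hρ.injOn with hν
  have hνapp : ∀ (μ : γ →₀ ℕ) (a : α), ν μ a = μ (ρ a) := fun μ a => rfl
  have hνs : ∀ μ : γ →₀ ℕ, (ν μ).support = μ.support.preimage ρ hρ.injOn := fun μ =>
    Finsupp.comapDomain_support _ _ _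
  have himg : ∀ μ : γ →₀ ℕ, μ.support.filter (· ∈ R) = ((ν μ).support).image ρ := by
    intro μ
    ext g
    simp only [Finset.mem_filter, Finset.mem_image, hνs, Finset.mem_preimage, hR,
      Finsupp.mem_support_iff, Finset.mem_univ, true_and]
    constructor
    · rintro ⟨h1', a, rfl⟩; exact ⟨a, h1', rfl⟩
    · rintro ⟨a, h1', rfl⟩; exact ⟨h1', a, rfl⟩
  have main : ∀ (σ : (α → K) → γ → K), (∀ x a, σ x (ρ a) = x a) →
      (∀ x g, g ∉ Set.range ρ → σ x g = σ 0 g) → ∀ (μ : γ →₀ ℕ) (x : α → K),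
      (∏ g ∈ μ.support, σ x g ^ μ g) =
      (∏ a ∈ (ν μ).support, x a ^ (ν μ) a) *
        (∏ g ∈ μ.support.filter (· ∉ R), σ 0 g ^ μ g) := by
    intro σ hσ hσc μ x
    rw [← Finset.prod_filter_mul_prod_filter_not μ.support (· ∈ R) (fun g => σ x g ^ μ g)]
    congr 1
    · rw [himg μ, Finset.prod_image (fun a _ b _ h => hρ h)]
      exact Finset.prod_congr rfl fun a _ => by rw [hσ x a, hνapp]
    · exact Finset.prod_congr rfl fun g hg => by
        rw [hσc x g (fun hmem => (Finset.mem_filter.1 hg).2 ((hRmem g).2 hmem))]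
  set C : ((α → K) → γ → K) → (γ →₀ ℕ) → K :=
    fun σ μ => ∏ g ∈ μ.support.filter (· ∉ R), σ 0 g ^ μ g with hCdef
  set D : (α → K) → (γ →₀ ℕ) → W := fun x μ =>
    (∏ a ∈ (ν μ).support, x a ^ (ν μ) a) • ((C σ₁ μ - C σ₀ μ) • c μ) with hD
  have hdiff : ∀ x, F (σ₁ x) - F (σ₀ x) = ∑ μ ∈ s, D x μ := by
    intro x
    rw [hc (σ₁ x), hc (σ₀ x), ← Finset.sum_sub_distrib]
    refine Finset.sum_congr rfl fun μ _ => ?_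
    rw [main σ₁ h1 hc1 μ x, main σ₀ h0 hc0 μ x, hD]
    simp only [mul_smul, ← smul_sub, sub_smul, hCdef]
  set p : (γ →₀ ℕ) → Prop := fun μ => ¬ (μ.support ⊆ R) with hp
  have hzero : ∀ x, ∀ μ ∈ s, D x μ ≠ 0 → p μ := by
    intro x μ _ hne
    by_contra hcon
    have hsub : μ.support ⊆ R := hcon
    have hempty : μ.support.filter (· ∉ R) = ∅ := by
      rw [Finset.filter_eq_empty_iff]
      intro g hg
      exact not_not.2 (hsub hg)
    have : C σ₁ μ = C σ₀ μ := by rw [hCdef]; simp only [hempty, Finset.prod_empty]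
    exact hne (by rw [hD]; simp [this])
  set s' : Finset (γ →₀ ℕ) := s.filter p with hs'
  refine ⟨s'.image ν, fun ν₀ => ∑ μ ∈ s'.filter (fun μ => ν μ = ν₀), (C σ₁ μ - C σ₀ μ) • c μ,
    ?_, ?_⟩
  · intro ν₀ hν₀
    obtain ⟨μ, hμ, rfl⟩ := Finset.mem_image.1 hν₀
    obtain ⟨hμs, hμp⟩ := Finset.mem_filter.1 hμ
    obtain ⟨g₀, hg₀s, hg₀R⟩ := Finset.not_subset.1 hμp
    have hsum1 : ((ν μ).sum fun _ k => k) = ∑ g ∈ μ.support.filter (· ∈ R), μ g := by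
      rw [Finsupp.sum, himg μ, Finset.sum_image (fun a _ b _ h => hρ h)]
      exact Finset.sum_congr rfl fun a _ => hνapp μ a
    have hsum2 : (μ.sum fun _ k => k) =
        (∑ g ∈ μ.support.filter (· ∈ R), μ g) + ∑ g ∈ μ.support.filter (· ∉ R), μ g := by
      rw [Finsupp.sum, ← Finset.sum_filter_add_sum_filter_not μ.support (· ∈ R)]
    have hge1 : 1 ≤ ∑ g ∈ μ.support.filter (· ∉ R), μ g := by
      refine Finset.single_le_sum (f := fun g => μ g) (fun g _ => Nat.zero_le _) ?_ |>.trans'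
        (Nat.one_le_iff_ne_zero.2 (Finsupp.mem_support_iff.1 hg₀s))
      exact Finset.mem_filter.2 ⟨hg₀s, hg₀R⟩
    have : ((ν μ).sum fun _ k => k) + 1 ≤ (μ.sum fun _ k => k) := by omega
    have hd' := hs μ hμs
    omega
  · intro x
    show F (σ₁ x) - F (σ₀ x) = _
    rw [hdiff x, ← Finset.sum_filter_of_ne (hzero x), ← hs']
    rw [← Finset.sum_fiberwise_of_maps_to (g := ν) (fun μ hμ => Finset.mem_image_of_mem ν hμ)
      (D x)]
    refine Finset.sum_congr rfl fun ν₀ _ => ?_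
    rw [Finset.smul_sum]
    refine (Finset.sum_congr rfl fun μ hμ => ?_).symm
    have : ν μ = ν₀ := (Finset.mem_filter.1 hμ).2
    rw [← this]

lemma projV_incl (u n : ℕ) : projV K u n ∘ₗ incl K u n = LinearMap.id := by
  ext x; simp [projV, incl]

lemma dsum_incl {m n : ℕ} (u : ℕ) (φ : (Fin m → K) →ₗ[K] (Fin n → K)) :
    dsum K u φ ∘ₗ incl K u m = incl K u n ∘ₗ φ := by
  ext x; simp [dsum, incl]

lemma projV_dsum {m n : ℕ} (u : ℕ) (φ : (Fin m → K) →ₗ[K] (Fin n → K)) :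
    projV K u n ∘ₗ dsum K u φ = φ ∘ₗ projV K u m := by
  ext x; simp [dsum, projV]

lemma map_projV_incl (P : GenRep K) (u n : ℕ) :
    P.map (projV K u n) ∘ₗ P.map (incl K u n) = LinearMap.id := by
  rw [← P.map_comp, projV_incl, P.map_id]

lemma map_dsum_incl (P : GenRep K) (u : ℕ) {m n : ℕ} (φ : (Fin m → K) →ₗ[K] (Fin n → K)) :
    P.map (dsum K u φ) ∘ₗ P.map (incl K u m) = P.map (incl K u n) ∘ₗ P.map φ := by
  rw [← P.map_comp, dsum_incl, P.map_comp]

lemma map_projV_dsum (P : GenRep K) (u : ℕ) {m n : ℕ} (φ : (Fin m → K) →ₗ[K] (Fin n → K)) :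
    P.map (projV K u n) ∘ₗ P.map (dsum K u φ) = P.map φ ∘ₗ P.map (projV K u m) := by
  rw [← P.map_comp, projV_dsum, P.map_comp]

def bmat (u : ℕ) {m n : ℕ} (y : Fin u × Fin u → K) (x : Fin n × Fin m → K) :
    Fin (u + n) × Fin (u + m) → K := fun p =>
  Sum.elim (fun a => Sum.elim (fun b => y (a, b)) (fun _ => 0) (finSumFinEquiv.symm p.2))
    (fun a => Sum.elim (fun _ => 0) (fun b => x (a, b)) (finSumFinEquiv.symm p.2))
    (finSumFinEquiv.symm p.1)

lemma mulVecLin_bmat (u : ℕ) {m n : ℕ} (y : Fin u × Fin u → K) (x : Fin n × Fin m → K) :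
    (Matrix.of fun i j => bmat u y x (i, j)).mulVecLin =
    (sumEquiv K u n).symm.toLinearMap ∘ₗ
      (LinearMap.prodMap (Matrix.of fun a b => y (a, b)).mulVecLin
        (Matrix.of fun a b => x (a, b)).mulVecLin) ∘ₗ
      (sumEquiv K u m).toLinearMap := by
  apply LinearMap.ext; intro v
  funext i
  have hi : i = finSumFinEquiv (finSumFinEquiv.symm i) := by simp
  rw [hi]
  rw [show (Matrix.of fun i j => bmat u y x (i, j)).mulVecLin v
        (finSumFinEquiv (finSumFinEquiv.symm i)) =
      ∑ j' : Fin u ⊕ Fin m, bmat u y x (finSumFinEquiv (finSumFinEquiv.symm i),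
        finSumFinEquiv j') * v (finSumFinEquiv j') from
    (Equiv.sum_comp finSumFinEquiv _).symm]
  rw [Fintype.sum_sum_type]
  rcases finSumFinEquiv.symm i with a | a <;>
    simp [bmat, sumEquiv, LinearEquiv.sumArrowLequivProdArrow, LinearEquiv.funCongrLeft,
      LinearMap.funLeft, Matrix.mulVec, dotProduct]

lemma bmat_id (u : ℕ) {m n : ℕ} (x : Fin n × Fin m → K) :
    (Matrix.of fun i j => bmat u (fun p : Fin u × Fin u => if p.1 = p.2 then (1 : K) else 0)
      x (i, j)).mulVecLin = dsum K u (Matrix.of fun i j => x (i, j)).mulVecLin := by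
  rw [mulVecLin_bmat]
  have h1 : (Matrix.of fun a b => if (a, b).1 = (a, b).2 then (1 : K) else 0) =
      (1 : Matrix (Fin u) (Fin u) K) := by
    ext a b; simp [Matrix.one_apply]
  rw [show (Matrix.of fun a b =>
      (fun p : Fin u × Fin u => if p.1 = p.2 then (1 : K) else 0) (a, b)) =
    (1 : Matrix (Fin u) (Fin u) K) from h1, Matrix.mulVecLin_one]
  rfl

lemma bmat_zero (u : ℕ) {m n : ℕ} (x : Fin n × Fin m → K) :
    (Matrix.of fun i j => bmat u (0 : Fin u × Fin u → K) x (i, j)).mulVecLin =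
    incl K u n ∘ₗ (Matrix.of fun i j => x (i, j)).mulVecLin ∘ₗ projV K u m := by
  rw [mulVecLin_bmat]
  have h0 : (Matrix.of fun a b => (0 : Fin u × Fin u → K) (a, b)) =
      (0 : Matrix (Fin u) (Fin u) K) := by ext a b; rfl
  rw [h0, Matrix.mulVecLin_zero]
  apply LinearMap.ext; intro v
  simp [incl, projV]

lemma key4 (P : GenRep K) (d u : ℕ) (hd : P.HasDegLE (d : ℤ)) (m n : ℕ) :
    PolyDeg K ((d : ℤ) - 1) (fun x : Fin n × Fin m → K =>
      ((P.shift u).map ((Matrix.of fun i j => x (i, j)).mulVecLin)) ∘ₗ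
        (LinearMap.ker (P.map (projV K u m))).subtype) := by
  classical
  set F : (Fin (u + n) × Fin (u + m) → K) → (P.obj (u + m) →ₗ[K] P.obj (u + n)) :=
    fun z => P.map ((Matrix.of fun i j => z (i, j)).mulVecLin) with hF
  set σ₁ : (Fin n × Fin m → K) → Fin (u + n) × Fin (u + m) → K :=
    fun x => bmat u (fun p : Fin u × Fin u => if p.1 = p.2 then (1 : K) else 0) x with hσ₁
  set σ₀ : (Fin n × Fin m → K) → Fin (u + n) × Fin (u + m) → K :=
    fun x => bmat u (0 : Fin u × Fin u → K) x with hσ₀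
  set ρ : Fin n × Fin m → Fin (u + n) × Fin (u + m) :=
    fun a => (finSumFinEquiv (Sum.inr a.1), finSumFinEquiv (Sum.inr a.2)) with hρdef
  have hρ : Function.Injective ρ := by
    intro a b h
    obtain ⟨h1, h2⟩ := Prod.mk.injEq .. ▸ h
    exact Prod.ext (Sum.inr_injective (finSumFinEquiv.injective h1))
      (Sum.inr_injective (finSumFinEquiv.injective h2))
  have hval : ∀ (y : Fin u × Fin u → K) (x : Fin n × Fin m → K) (a : Fin n × Fin m),
      bmat u y x (ρ a) = x a := by
    intro y x a
    simp [bmat, hρdef]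
  have hconst : ∀ (y : Fin u × Fin u → K) (x x' : Fin n × Fin m → K)
      (g : Fin (u + n) × Fin (u + m)), g ∉ Set.range ρ → bmat u y x g = bmat u y x' g := by
    intro y x x' g hg
    obtain ⟨g1, g2⟩ := g
    unfold bmat
    simp only
    rcases h1 : finSumFinEquiv.symm g1 with a | a <;>
      rcases h2 : finSumFinEquiv.symm g2 with b | b <;> simp only [Sum.elim_inl, Sum.elim_inr]
    exact absurd ⟨(a, b), by
      simp only [hρdef]
      rw [← h1, ← h2]
      simp⟩ hg
  have hsub := polyDeg_sub_subst (K := K) d F (hd (u + m) (u + n)) σ₁ σ₀ ρ hρ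
    (fun x a => hval _ x a) (fun x a => hval _ x a)
    (fun x g hg => hconst _ x 0 g hg) (fun x g hg => hconst _ x 0 g hg)
  have hker : P.map (projV K u m) ∘ₗ (LinearMap.ker (P.map (projV K u m))).subtype = 0 := by
    apply LinearMap.ext; intro w
    exact w.2
  have heq : (fun x : Fin n × Fin m → K =>
      ((P.shift u).map ((Matrix.of fun i j => x (i, j)).mulVecLin)) ∘ₗ
        (LinearMap.ker (P.map (projV K u m))).subtype) =
      fun x => LinearMap.lcomp K _ (LinearMap.ker (P.map (projV K u m))).subtype
        (F (σ₁ x) - F (σ₀ x)) := by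
    funext x
    have e1 : F (σ₁ x) = P.map (dsum K u (Matrix.of fun i j => x (i, j)).mulVecLin) := by
      rw [hF]
      exact congrArg P.map (bmat_id u x)
    have e0 : F (σ₀ x) ∘ₗ (LinearMap.ker (P.map (projV K u m))).subtype = 0 := by
      rw [hF]
      show P.map ((Matrix.of fun i j => bmat u (0 : Fin u × Fin u → K) x (i, j)).mulVecLin)
        ∘ₗ _ = 0
      rw [bmat_zero u x, P.map_comp, P.map_comp, LinearMap.comp_assoc, LinearMap.comp_assoc,
        hker]
      simp
    show P.map (dsum K u (Matrix.of fun i j => x (i, j)).mulVecLin) ∘ₗ _ = _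
    rw [LinearMap.lcomp_apply', LinearMap.sub_comp, e0, sub_zero, e1]
  rw [heq]
  exact polyDeg_comp_linear _ hsub

end Aux

/-- Shifting does not change the top part: for `P` of degree `d ≥ 0`, the morphism
`α = P(ι)` carries `P_{>d-1}` isomorphically onto `(Sh_U P)_{>d-1}`; moreover `Sh_U P`
decomposes as the direct sum of a copy of `P` (the image of `α`, with `β ∘ α = id` for
`β = P(π)`) and the kernel of `β`, which has degree at most `d - 1`. -/
theorem stmt13 (K : Type) [Field K] [Fintype K] (P : GenRep K) (d : ℕ)
    (hd : P.IsDegree (d : ℤ)) (u : ℕ)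
    (N : SubRep P) (hN : IsTopPart P ((d : ℤ) - 1) N)
    (M : SubRep (P.shift u)) (hM : IsTopPart (P.shift u) ((d : ℤ) - 1) M) :
    (∀ n : ℕ, Submodule.map (P.map (incl K u n)) (N.carrier n) = M.carrier n) ∧
    (∀ n : ℕ, P.map (projV K u n) ∘ₗ P.map (incl K u n) = LinearMap.id) ∧
    (∀ n : ℕ, IsCompl (LinearMap.range (P.map (incl K u n)))
      (LinearMap.ker (P.map (projV K u n)))) ∧
    (∀ m n : ℕ, PolyDeg K ((d : ℤ) - 1) (fun x : Fin n × Fin m → K =>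
      ((P.shift u).map ((Matrix.of fun i j => x (i, j)).mulVecLin)) ∘ₗ
        (LinearMap.ker (P.map (projV K u m))).subtype)) := by
  classical
  have hβα : ∀ n, P.map (projV K u n) ∘ₗ P.map (incl K u n) = LinearMap.id :=
    map_projV_incl P u
  have part3 : ∀ n : ℕ, IsCompl (LinearMap.range (P.map (incl K u n)))
      (LinearMap.ker (P.map (projV K u n))) := by
    intro n
    have h : ∀ v, P.map (projV K u n) (P.map (incl K u n) v) = v := fun v =>
      LinearMap.congr_fun (hβα n) v
    constructor
    · rw [Submodule.disjoint_def]
      intro x hx hk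
      obtain ⟨a, rfl⟩ := hx
      have ha : a = 0 := by
        have h2 := h a
        rw [LinearMap.mem_ker.1 hk] at h2
        exact h2.symm
      rw [ha, map_zero]
    · rw [codisjoint_iff, eq_top_iff]
      intro v _
      refine Submodule.mem_sup.2 ⟨P.map (incl K u n) (P.map (projV K u n) v),
        ⟨P.map (projV K u n) v, rfl⟩, v - P.map (incl K u n) (P.map (projV K u n) v),
        LinearMap.mem_ker.2 ?_, by abel⟩
      rw [map_sub, h (P.map (projV K u n) v), sub_self]
  set M' : SubRep (P.shift u) :=
    { carrier := fun n => Submodule.map (P.map (incl K u n)) (N.carrier n)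
      stable := by
        intro m n φ x hx
        obtain ⟨y, hy, rfl⟩ := hx
        refine ⟨P.map φ y, N.stable φ y hy, ?_⟩
        exact (LinearMap.congr_fun (map_dsum_incl P u φ) y).symm } with hM'def
  have quotM' : QuotDegLE (P.shift u) M' ((d : ℤ) - 1) := by
    intro m n
    have hρker : ∀ v : P.obj (u + m),
        P.map (projV K u m) (v - P.map (incl K u m) (P.map (projV K u m) v)) = 0 := by
      intro v
      have h3 := LinearMap.congr_fun (hβα m) (P.map (projV K u m) v)
      simp only [LinearMap.comp_apply, LinearMap.id_apply] at h3
      rw [map_sub, h3, sub_self]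
    set ρm : P.obj (u + m) →ₗ[K] LinearMap.ker (P.map (projV K u m)) :=
      LinearMap.codRestrict _
        (LinearMap.id - P.map (incl K u m) ∘ₗ P.map (projV K u m))
        (fun v => LinearMap.mem_ker.2 (by simpa using hρker v)) with hρm
    set g : (P.obj n ⧸ N.carrier n) →ₗ[K] ((P.shift u).obj n ⧸ M'.carrier n) :=
      Submodule.liftQ (N.carrier n) ((M'.carrier n).mkQ ∘ₗ P.map (incl K u n))
        (fun y hy => by
          rw [LinearMap.mem_ker]
          change Submodule.Quotient.mk (p := M'.carrier n) (P.map (incl K u n) y) = 0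
          exact (Submodule.Quotient.mk_eq_zero _).2 ⟨y, hy, rfl⟩) with hg
    have hterm1 := polyDeg_comp_linear (LinearMap.lcomp K _ (P.map (projV K u m)))
      (polyDeg_comp_linear (LinearMap.llcomp K _ _ _ g) (hN.1 m n))
    have hterm2 := polyDeg_comp_linear (LinearMap.lcomp K _ ρm)
      (polyDeg_comp_linear (LinearMap.llcomp K _ _ _ (M'.carrier n).mkQ)
        (key4 P d u hd.1 m n))
    refine polyDeg_congr ?_ (polyDeg_add hterm1 hterm2)
    intro x
    set X := (Matrix.of fun i j => x (i, j)).mulVecLin with hX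
    show (M'.carrier n).mkQ ∘ₗ (P.shift u).map X =
      (g ∘ₗ ((N.carrier n).mkQ ∘ₗ P.map X)) ∘ₗ P.map (projV K u m) +
      ((M'.carrier n).mkQ ∘ₗ ((P.shift u).map X ∘ₗ
        (LinearMap.ker (P.map (projV K u m))).subtype)) ∘ₗ ρm
    apply LinearMap.ext; intro v
    simp only [LinearMap.add_apply, LinearMap.comp_apply]
    show (M'.carrier n).mkQ (P.map (dsum K u X) v) =
      (M'.carrier n).mkQ (P.map (incl K u n) (P.map X (P.map (projV K u m) v))) +
      (M'.carrier n).mkQ (P.map (dsum K u X)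
        (id (α := P.obj (u + m)) v - P.map (incl K u m) (P.map (projV K u m) v)))
    refine Eq.trans ?_ (map_add (M'.carrier n).mkQ _ _)
    congr 1
    have h4 := LinearMap.congr_fun (map_dsum_incl P u X) (P.map (projV K u m) v)
    simp only [LinearMap.comp_apply] at h4
    rw [← h4]
    have h5 : P.map (incl K u m) (P.map (projV K u m) v) +
        (id (α := P.obj (u + m)) v - P.map (incl K u m) (P.map (projV K u m) v)) = v := by
      simp
      rfl
    conv_lhs => rw [← h5]
    exact map_add _ _ _
  set N' : SubRep P :=
    { carrier := fun n => Submodule.comap (P.map (incl K u n)) (M.carrier n)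
      stable := by
        intro m n φ y hy
        have : P.map (incl K u n) (P.map φ y) =
            (P.shift u).map φ (P.map (incl K u m) y) :=
          (LinearMap.congr_fun (map_dsum_incl P u φ) y).symm
        exact Submodule.mem_comap.2 (this ▸ M.stable φ _ hy) } with hN'def
  have quotN' : QuotDegLE P N' ((d : ℤ) - 1) := by
    intro m n
    set abar : (P.obj n ⧸ N'.carrier n) →ₗ[K] ((P.shift u).obj n ⧸ M.carrier n) :=
      Submodule.liftQ (N'.carrier n) ((M.carrier n).mkQ ∘ₗ P.map (incl K u n))
        (fun y hy => by
          rw [LinearMap.mem_ker]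
          change Submodule.Quotient.mk (p := M.carrier n) (P.map (incl K u n) y) = 0
          exact (Submodule.Quotient.mk_eq_zero _).2 hy) with habar
    have hker : LinearMap.ker abar = ⊥ := by
      refine Submodule.ker_liftQ_eq_bot _ _ _ ?_
      intro y hy
      rw [LinearMap.mem_ker] at hy
      change Submodule.Quotient.mk (p := M.carrier n) (P.map (incl K u n) y) = 0 at hy
      exact (Submodule.Quotient.mk_eq_zero (M.carrier n)).1 hy
    obtain ⟨sig, hsig⟩ := abar.exists_leftInverse_of_injective hker
    refine polyDeg_congr ?_ (polyDeg_comp_linear (LinearMap.lcomp K _ (P.map (incl K u m)))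
      (polyDeg_comp_linear (LinearMap.llcomp K _ _ _ sig) (hM.1 m n)))
    intro x
    set X := (Matrix.of fun i j => x (i, j)).mulVecLin with hX
    show (N'.carrier n).mkQ ∘ₗ P.map X =
      (sig ∘ₗ ((M.carrier n).mkQ ∘ₗ (P.shift u).map X)) ∘ₗ P.map (incl K u m)
    apply LinearMap.ext; intro v
    simp only [LinearMap.comp_apply]
    have h4 := LinearMap.congr_fun (map_dsum_incl P u X) v
    simp only [LinearMap.comp_apply] at h4
    show (N'.carrier n).mkQ (P.map X v) =
      sig ((M.carrier n).mkQ (P.map (dsum K u X) (P.map (incl K u m) v)))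
    rw [h4]
    show (N'.carrier n).mkQ (P.map X v) =
      sig (abar ((N'.carrier n).mkQ (P.map X v)))
    rw [← LinearMap.comp_apply sig abar, hsig]
    rfl
  have hMle : ∀ n, M.carrier n ≤ M'.carrier n := hM.2 M' quotM'
  have hNle : ∀ n, N.carrier n ≤ N'.carrier n := hN.2 N' quotN'
  refine ⟨fun n => le_antisymm ?_ (hMle n), hβα, part3, fun m n => key4 P d u hd.1 m n⟩
  exact Submodule.map_le_iff_le_comap.2 (hNle n)
end
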